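/- arXiv:1709.04104 — 2 statements merged into one kernel-verified Lean document; each statement's English description precedes it below -/
import Mathlib

section
/- Let b, c ∈ ℝ with b > -1 and c > -1. Then the sequence of partial products P_N = ∏_{n=1}^{N} ((n+b)/(n+c))^{u_n} converges as N → ∞ to a positive real limit. -/
open Filter Finset Topology

def u (n : ℕ) : ℤ := (-1) ^ (Nat.digits 2 n).sum

lemma u_cases (n : ℕ) : u n = 1 ∨ u n = -1 := by
  rcases Nat.even_or_odd ((Nat.digits 2 n).sum) with h | h
  · exact Or.inl (h.neg_one_pow)
  · exact Or.inr (h.neg_one_pow)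

lemma u_even (k : ℕ) : u (2 * k) = u k := by
  rcases Nat.eq_zero_or_pos k with h | h
  · simp [h]
  · unfold u
    rw [Nat.digits_def' (by norm_num) (by omega)]
    simp [Nat.mul_div_cancel_left _ (by norm_num : 0 < 2)]

lemma u_odd (k : ℕ) : u (2 * k + 1) = -u k := by
  unfold u
  rw [Nat.digits_def' (by norm_num) (by omega)]
  have h1 : (2 * k + 1) % 2 = 1 := by omega
  have h2 : (2 * k + 1) / 2 = k := by omega
  rw [h1, h2]
  simp [pow_succ, pow_add]

lemma log_sub_le {p q : ℝ} (hp : 0 < p) (hq : 0 < q) :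
    Real.log p - Real.log q ≤ (p - q) / q := by
  have h := Real.log_le_sub_one_of_pos (div_pos hp hq)
  rw [Real.log_div hp.ne' hq.ne'] at h
  have : p / q - 1 = (p - q) / q := by field_simp
  linarith [this ▸ h]

section main
variable {b c : ℝ} (hb : -1 < b) (hc : -1 < c)

noncomputable def f (b c : ℝ) (n : ℕ) : ℝ := Real.log (((n : ℝ) + b) / ((n : ℝ) + c))

lemma f_split (hb : -1 < b) (hc : -1 < c) {n : ℕ} (hn : 1 ≤ n) :
    f b c n = Real.log ((n : ℝ) + b) - Real.log ((n : ℝ) + c) := by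
  have h1 : (1 : ℝ) ≤ (n : ℝ) := by exact_mod_cast hn
  exact Real.log_div (by linarith) (by linarith)

lemma pair_bound (hb : -1 < b) (hc : -1 < c) (k : ℕ) (hk : 1 ≤ k) :
    |f b c (2 * k) - f b c (2 * k + 1)| ≤ |b - c| / (k : ℝ) ^ 2 := by
  have hk1 : (1 : ℝ) ≤ (k : ℝ) := by exact_mod_cast hk
  set x : ℝ := ((2 * k : ℕ) : ℝ) with hx
  have hxval : x = 2 * (k : ℝ) := by rw [hx]; push_cast; ring
  have hx1 : ((2 * k + 1 : ℕ) : ℝ) = x + 1 := by rw [hx]; push_cast; ring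
  have hxb : 0 < x + b := by rw [hxval]; linarith
  have hxc : 0 < x + c := by rw [hxval]; linarith
  have hxb1 : 0 < x + 1 + b := by linarith
  have hxc1 : 0 < x + 1 + c := by linarith
  have hP : 0 < (x + b) * (x + 1 + c) := mul_pos hxb hxc1
  have hQ : 0 < (x + 1 + b) * (x + c) := mul_pos hxb1 hxc
  have hsq : (k : ℝ) ^ 2 ≤ (x + b) * (x + 1 + c) := by rw [hxval]; nlinarith
  have hsq' : (k : ℝ) ^ 2 ≤ (x + 1 + b) * (x + c) := by rw [hxval]; nlinarith
  have hk2 : (0 : ℝ) < (k : ℝ) ^ 2 := by positivity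
  have heq : f b c (2 * k) - f b c (2 * k + 1) =
      Real.log ((x + b) * (x + 1 + c)) - Real.log ((x + 1 + b) * (x + c)) := by
    rw [f_split hb hc (by omega), f_split hb hc (by omega), hx1,
      Real.log_mul hxb.ne' hxc1.ne', Real.log_mul hxb1.ne' hxc.ne']
    ring
  rw [heq, abs_le]
  constructor
  · have h := log_sub_le hQ hP
    have hnum : (x + 1 + b) * (x + c) - (x + b) * (x + 1 + c) = c - b := by ring
    rw [hnum] at h
    have h2 : (c - b) / ((x + b) * (x + 1 + c)) ≤ |b - c| / (k : ℝ) ^ 2 := by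
      calc (c - b) / ((x + b) * (x + 1 + c)) ≤ |b - c| / ((x + b) * (x + 1 + c)) := by
            gcongr
            rw [abs_sub_comm]
            exact le_abs_self _
        _ ≤ |b - c| / (k : ℝ) ^ 2 := by
            apply div_le_div_of_nonneg_left (abs_nonneg _) hk2 hsq
    linarith
  · have h := log_sub_le hP hQ
    have hnum : (x + b) * (x + 1 + c) - (x + 1 + b) * (x + c) = b - c := by ring
    rw [hnum] at h
    have h2 : (b - c) / ((x + 1 + b) * (x + c)) ≤ |b - c| / (k : ℝ) ^ 2 := by
      calc (b - c) / ((x + 1 + b) * (x + c)) ≤ |b - c| / ((x + 1 + b) * (x + c)) := by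
            gcongr
            exact le_abs_self _
        _ ≤ |b - c| / (k : ℝ) ^ 2 := by
            apply div_le_div_of_nonneg_left (abs_nonneg _) hk2 hsq'
    linarith

end main

lemma f_tendsto (b c : ℝ) (hb : -1 < b) (hc : -1 < c) :
    Tendsto (f b c) atTop (𝓝 0) := by
  have h1 : Tendsto (fun n : ℕ => (n : ℝ) + c) atTop atTop :=
    tendsto_atTop_add_const_right _ c tendsto_natCast_atTop_atTop
  have h2 : Tendsto (fun n : ℕ => (b - c) / ((n : ℝ) + c)) atTop (𝓝 0) :=
    Tendsto.div_atTop tendsto_const_nhds h1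
  have h3 : Tendsto (fun n : ℕ => ((n : ℝ) + b) / ((n : ℝ) + c)) atTop (𝓝 1) := by
    have h4 : Tendsto (fun n : ℕ => 1 + (b - c) / ((n : ℝ) + c)) atTop (𝓝 1) := by
      simpa using h2.const_add 1
    apply h4.congr'
    filter_upwards [eventually_ge_atTop 1] with n hn
    have hn1 : (1 : ℝ) ≤ (n : ℝ) := by exact_mod_cast hn
    have hnc : (n : ℝ) + c ≠ 0 := ne_of_gt (by linarith)
    field_simp
    ring
  have hlog : Tendsto Real.log (𝓝 (1 : ℝ)) (𝓝 0) := by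
    simpa using (Real.continuousAt_log one_ne_zero).tendsto
  exact hlog.comp h3

lemma sum_bound_summable (C : ℝ) : Summable (fun k : ℕ => C / ((k : ℝ) + 1) ^ 2) := by
  have h : Summable (fun k : ℕ => 1 / ((k : ℝ)) ^ 2) :=
    Real.summable_one_div_nat_pow.mpr one_lt_two
  have h2 : Summable (fun k : ℕ => 1 / ((k : ℝ) + 1) ^ 2) := by
    have h3 := (summable_nat_add_iff 1).mpr h
    apply h3.congr
    intro k
    push_cast
    ring
  simpa [div_eq_mul_inv, one_mul] using h2.mul_left C

/-- For `b, c > -1`, the partial products `∏_{n=1}^{N} ((n+b)/(n+c))^{u_n}`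
converge to a positive real limit. -/
theorem stmt_0 (b c : ℝ) (hb : -1 < b) (hc : -1 < c) :
    ∃ L : ℝ, 0 < L ∧
      Tendsto (fun N : ℕ => ∏ n ∈ Finset.Icc 1 N,
        (((n : ℝ) + b) / ((n : ℝ) + c)) ^ (u n)) atTop (𝓝 L) := by
  -- log of each factor times its sign
  set a : ℕ → ℝ := fun n => f b c n * (u n : ℝ) with ha
  -- positivity of factors
  have hfac : ∀ n : ℕ, 1 ≤ n → 0 < ((n : ℝ) + b) / ((n : ℝ) + c) := by
    intro n hn
    have h1 : (1 : ℝ) ≤ (n : ℝ) := by exact_mod_cast hn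
    exact div_pos (by linarith) (by linarith)
  -- product = exp of sum
  have hprod : ∀ N : ℕ, (∏ n ∈ Finset.Icc 1 N,
      (((n : ℝ) + b) / ((n : ℝ) + c)) ^ (u n)) = Real.exp (∑ n ∈ Finset.Icc 1 N, a n) := by
    intro N
    rw [Real.exp_sum]
    apply Finset.prod_congr rfl
    intro n hn
    have hn1 : 1 ≤ n := (Finset.mem_Icc.mp hn).1
    have hx : 0 < ((n : ℝ) + b) / ((n : ℝ) + c) := hfac n hn1
    rcases u_cases n with h | h
    · rw [h]
      simp only [ha, h, zpow_one, Int.cast_one, mul_one]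
      exact (Real.exp_log hx).symm
    · rw [h]
      simp only [ha, h, Int.cast_neg, Int.cast_one, mul_neg_one, zpow_neg, zpow_one]
      rw [Real.exp_neg]
      exact congrArg Inv.inv (Real.exp_log hx).symm
  -- paired terms
  set g : ℕ → ℝ := fun k => (u (k + 1) : ℝ) * (f b c (2 * (k + 1)) - f b c (2 * (k + 1) + 1))
    with hgdef
  have hpair : ∀ k : ℕ, a (2 * (k + 1)) + a (2 * (k + 1) + 1) = g k := by
    intro k
    simp only [ha, hgdef, u_even, u_odd]
    push_cast
    ring
  have hgbound : ∀ k : ℕ, |g k| ≤ |b - c| / ((k : ℝ) + 1) ^ 2 := by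
    intro k
    have h1 := pair_bound hb hc (k + 1) le_add_self
    have h2 : |(u (k + 1) : ℝ)| = 1 := by
      rcases u_cases (k + 1) with h | h <;> simp [h]
    have h3 : ((k + 1 : ℕ) : ℝ) = (k : ℝ) + 1 := by push_cast; ring
    calc |g k| = |(u (k + 1) : ℝ)| * |f b c (2 * (k + 1)) - f b c (2 * (k + 1) + 1)| :=
          abs_mul _ _
      _ = |f b c (2 * (k + 1)) - f b c (2 * (k + 1) + 1)| := by rw [h2, one_mul]
      _ ≤ |b - c| / ((k : ℝ) + 1) ^ 2 := by rw [← h3]; exact h1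
  have hgsum : Summable g := by
    apply Summable.of_abs
    exact Summable.of_nonneg_of_le (fun k => abs_nonneg _) hgbound (sum_bound_summable _)
  -- partial sums in pairs
  set T : ℕ → ℝ := fun M => a 1 + ∑ k ∈ Finset.range M, g k with hTdef
  set S : ℕ → ℝ := fun N => ∑ n ∈ Finset.Icc 1 N, a n with hSdef
  have hSsucc : ∀ N : ℕ, S (N + 1) = S N + a (N + 1) := by
    intro N
    simp only [hSdef]
    rw [Finset.sum_Icc_succ_top (by omega)]
  have hTsucc : ∀ M : ℕ, T (M + 1) = T M + g M := by
    intro M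
    simp only [hTdef, Finset.sum_range_succ]
    ring
  have hodd : ∀ M : ℕ, S (2 * M + 1) = T M := by
    intro M
    induction M with
    | zero => simp [hSdef, hTdef]
    | succ M ih =>
      have e' : S (2 * (M + 1)) = S (2 * M + 1) + a (2 * (M + 1)) := by
        rw [show 2 * (M + 1) = 2 * M + 1 + 1 from by ring]
        exact hSsucc _
      have e'' : S (2 * (M + 1) + 1) = S (2 * (M + 1)) + a (2 * (M + 1) + 1) := hSsucc _
      rw [e'', e', ih, hTsucc, ← hpair M]
      ring
  have heven : ∀ M : ℕ, S (2 * M + 2) = T M + a (2 * M + 2) := by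
    intro M
    rw [show 2 * M + 2 = 2 * M + 1 + 1 from by ring, hSsucc, hodd M]
  -- a → 0
  have ha0 : Tendsto a atTop (𝓝 0) := by
    apply squeeze_zero_norm (a := fun n => |f b c n|)
    · intro n
      have h2 : |(u n : ℝ)| ≤ 1 := by
        rcases u_cases n with h | h <;> simp [h]
      calc ‖a n‖ = |f b c n| * |(u n : ℝ)| := abs_mul _ _
        _ ≤ |f b c n| * 1 := by gcongr
        _ = |f b c n| := mul_one _
    · simpa using (f_tendsto b c hb hc).abs
  -- limit of T
  set L0 : ℝ := a 1 + ∑' k, g k with hL0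
  have hT : Tendsto T atTop (𝓝 L0) := by
    exact (hgsum.hasSum.tendsto_sum_nat).const_add (a 1)
  -- S tends to L0
  have hS : Tendsto S atTop (𝓝 L0) := by
    have hkey : ∀ N : ℕ, 1 ≤ N → S N = T ((N - 1) / 2) + (if N % 2 = 0 then a N else 0) := by
      intro N hN
      rcases Nat.even_or_odd N with ⟨M, hM⟩ | ⟨M, hM⟩
      · have hM1 : 1 ≤ M := by omega
        have e1 : N = 2 * (M - 1) + 2 := by omega
        have e2 : (N - 1) / 2 = M - 1 := by omega
        have e3 : N % 2 = 0 := by omega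
        rw [if_pos e3, e2]
        calc S N = S (2 * (M - 1) + 2) := by rw [← e1]
          _ = T (M - 1) + a (2 * (M - 1) + 2) := heven _
          _ = T (M - 1) + a N := by rw [← e1]
      · have e2 : (N - 1) / 2 = M := by omega
        have e3 : ¬ N % 2 = 0 := by omega
        rw [if_neg e3, add_zero, e2, hM]
        exact hodd M
    have hdiv : Tendsto (fun N : ℕ => (N - 1) / 2) atTop atTop := by
      apply tendsto_atTop_atTop.mpr
      intro m
      exact ⟨2 * m + 1, fun n hn => by omega⟩
    have h1 : Tendsto (fun N : ℕ => T ((N - 1) / 2)) atTop (𝓝 L0) := hT.comp hdiv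
    have h2 : Tendsto (fun N : ℕ => (if N % 2 = 0 then a N else 0)) atTop (𝓝 0) := by
      apply squeeze_zero_norm (a := fun n => ‖a n‖)
      · intro n
        split <;> simp [norm_nonneg]
      · simpa using ha0.norm
    have h3 := h1.add h2
    rw [add_zero] at h3
    apply h3.congr'
    filter_upwards [eventually_ge_atTop 1] with N hN
    exact (hkey N hN).symm
  refine ⟨Real.exp L0, Real.exp_pos _, ?_⟩
  have := (Real.continuous_exp.tendsto L0).comp hS
  apply this.congr
  intro N
  exact (hprod N).symm
end

section
/- Let p, q ∈ ℝ[x] be nonzero polynomials such that p(n) ≠ 0 and q(n) ≠ 0 for every integer n ≥ 1. If the sequence of partial products P_N = ∏_{n=1}^{N} (p(n)/q(n))^{u_n} converges as N → ∞ to a nonzero limit, then p and q have the same degree and the same leading coefficient. -/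
open Filter Finset Topology Polynomial

lemma u_two_mul (n : ℕ) (hn : 0 < n) : u (2 * n) = u n := by
  unfold u
  rw [Nat.digits_def' (by norm_num : 1 < 2) (by positivity)]
  simp [Nat.mul_div_cancel_left, Nat.mul_mod_right]

lemma u_three_pow (k : ℕ) : u (3 * 2 ^ k) = 1 := by
  induction k with
  | zero =>
      show u 3 = 1
      unfold u
      rw [Nat.digits_def' (by norm_num : 1 < 2) (by norm_num),
          Nat.digits_def' (by norm_num : 1 < 2) (by norm_num)]
      norm_num
  | succ k ih =>
      have : 3 * 2 ^ (k + 1) = 2 * (3 * 2 ^ k) := by ring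
      rw [this, u_two_mul _ (by positivity)]
      exact ih

/-- If `p, q` are nonzero real polynomials, nonvanishing at the positive integers,
and the partial products `∏_{n=1}^{N} (p(n)/q(n))^{u_n}` converge to a nonzero
limit, then `p` and `q` have the same degree and the same leading coefficient. -/
theorem stmt_1 (p q : Polynomial ℝ) (hp : p ≠ 0) (hq : q ≠ 0)
    (hpn : ∀ n : ℕ, 1 ≤ n → p.eval (n : ℝ) ≠ 0)
    (hqn : ∀ n : ℕ, 1 ≤ n → q.eval (n : ℝ) ≠ 0)
    (L : ℝ) (hL : L ≠ 0)
    (hconv : Tendsto (fun N : ℕ => ∏ n ∈ Finset.Icc 1 N,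
      (p.eval (n : ℝ) / q.eval (n : ℝ)) ^ (u n)) atTop (𝓝 L)) :
    p.degree = q.degree ∧ p.leadingCoeff = q.leadingCoeff := by
  set f : ℕ → ℝ := fun n => (p.eval (n : ℝ) / q.eval (n : ℝ)) ^ (u n) with hf
  set P : ℕ → ℝ := fun N => ∏ n ∈ Finset.Icc 1 N, f n with hPdef
  have hfne : ∀ n, 1 ≤ n → f n ≠ 0 := fun n hn =>
    zpow_ne_zero _ (div_ne_zero (hpn n hn) (hqn n hn))
  have hPne : ∀ N, P N ≠ 0 := fun N =>
    Finset.prod_ne_zero_iff.mpr (fun n hn => hfne n (Finset.mem_Icc.mp hn).1)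
  have hshift : Tendsto (fun N => P (N + 1)) atTop (𝓝 L) :=
    hconv.comp (tendsto_add_atTop_nat 1)
  have hratio : Tendsto (fun N => P (N + 1) / P N) atTop (𝓝 1) := by
    have := hshift.div hconv hL
    simpa [div_self hL, Pi.div_def] using this
  have hterm : Tendsto (fun N => f (N + 1)) atTop (𝓝 1) := by
    refine hratio.congr (fun N => ?_)
    have : P (N + 1) = P N * f (N + 1) := by
      simp only [hPdef]
      exact Finset.prod_Icc_succ_top (Nat.le_add_left 1 N) f
    rw [this, mul_div_cancel_left₀ _ (hPne N)]
  have hfto1 : Tendsto f atTop (𝓝 1) := by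
    rwa [← tendsto_add_atTop_iff_nat 1]
  have h2 : Tendsto (fun k : ℕ => 3 * 2 ^ k) atTop atTop := by
    apply tendsto_atTop_mono (fun k => Nat.le_mul_of_pos_left _ (by norm_num))
    exact tendsto_pow_atTop_atTop_of_one_lt one_lt_two
  have hsub : Tendsto (fun k : ℕ =>
      p.eval ((3 * 2 ^ k : ℕ) : ℝ) / q.eval ((3 * 2 ^ k : ℕ) : ℝ)) atTop (𝓝 1) := by
    have := hfto1.comp h2
    refine this.congr (fun k => ?_)
    simp [hf, Function.comp, u_three_pow]
  have hcast : Tendsto (fun k : ℕ => ((3 * 2 ^ k : ℕ) : ℝ)) atTop atTop :=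
    tendsto_natCast_atTop_atTop.comp h2
  have hdeg : p.degree = q.degree := by
    rcases lt_trichotomy p.degree q.degree with h | h | h
    · exfalso
      have h0 : Tendsto (fun k : ℕ =>
          p.eval ((3 * 2 ^ k : ℕ) : ℝ) / q.eval ((3 * 2 ^ k : ℕ) : ℝ)) atTop (𝓝 0) :=
        (Polynomial.div_tendsto_zero_of_degree_lt p q h).comp hcast
      exact one_ne_zero (tendsto_nhds_unique hsub h0)
    · exact h
    · exfalso
      have habs : Tendsto (fun k : ℕ =>
          |p.eval ((3 * 2 ^ k : ℕ) : ℝ) / q.eval ((3 * 2 ^ k : ℕ) : ℝ)|) atTop atTop :=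
        (Polynomial.abs_div_tendsto_atTop_of_degree_gt p q h hq).comp hcast
      have h1 : Tendsto (fun k : ℕ =>
          |p.eval ((3 * 2 ^ k : ℕ) : ℝ) / q.eval ((3 * 2 ^ k : ℕ) : ℝ)|) atTop (𝓝 |1|) :=
        hsub.abs
      exact not_tendsto_atTop_of_tendsto_nhds h1 habs
  refine ⟨hdeg, ?_⟩
  have hlc : Tendsto (fun k : ℕ =>
      p.eval ((3 * 2 ^ k : ℕ) : ℝ) / q.eval ((3 * 2 ^ k : ℕ) : ℝ)) atTop
      (𝓝 (p.leadingCoeff / q.leadingCoeff)) :=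
    (Polynomial.div_tendsto_leadingCoeff_div_of_degree_eq p q hdeg).comp hcast
  have := tendsto_nhds_unique hsub hlc
  have hqlc : q.leadingCoeff ≠ 0 := Polynomial.leadingCoeff_ne_zero.mpr hq
  field_simp at this
  linarith
end
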